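/- For every k ≥ 0, Ψ([k,x;k]_q) = 1/[k+1]_q, i.e., the Ψ-evaluation of the q-binomial polynomial (1/[k]!_q)·∏_{t=1}^{k}([t]_q + qᵗ x) equals 1/[k+1]_q. -/

import Mathlib

open Finset Polynomial PowerSeries

noncomputable section

/-- The variable `q`, viewed as a rational function over `ℚ`. -/
def qv : RatFunc ℚ := RatFunc.X

/-- The Carlitz q-Bernoulli numbers: `β 0 = 1` together with the umbral recurrence
`q·(qβ+1)^n − β_n = [n = 1]` for `n ≥ 1`, where after binomial expansion the powers
`β^k` are replaced by `β k`. -/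
def IsCarlitz (β : ℕ → RatFunc ℚ) : Prop :=
  β 0 = 1 ∧ ∀ n : ℕ, 1 ≤ n →
    qv * (∑ k ∈ Finset.range (n + 1), (n.choose k : RatFunc ℚ) * qv ^ k * β k) - β n
      = if n = 1 then 1 else 0

/-- The q-integer `[m]_q = (q^m − 1)/(q − 1)`, for `m : ℤ`. -/
def qint (m : ℤ) : RatFunc ℚ := (qv ^ m - 1) / (qv - 1)

/-- The q-factorial `[n]!_q`. -/
def qfact (n : ℕ) : RatFunc ℚ := ∏ t ∈ Finset.range n, qint (t + 1)

/-- The Gaussian binomial coefficient. -/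
def qbinom (n k : ℕ) : RatFunc ℚ := qfact n / (qfact k * qfact (n - k))

/-- The linear functional `Ψ` on polynomials in `x`, sending `xⁿ` to `β n`. -/
def Psi (β : ℕ → RatFunc ℚ) (p : Polynomial (RatFunc ℚ)) : RatFunc ℚ :=
  p.sum fun n a => a * β n

/-- The q-binomial polynomial
`[i, x; d]_q = (1/[d]!_q) ∏_{t=1}^{d} ([i−d+t]_q + q^{i−d+t} x)`. -/
def qbase (i d : ℕ) : Polynomial (RatFunc ℚ) :=
  Polynomial.C (qfact d)⁻¹ *
    ∏ t ∈ Finset.Icc 1 d,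
      (Polynomial.C (qint ((i : ℤ) - d + t)) +
        Polynomial.C (qv ^ ((i : ℤ) - d + t)) * Polynomial.X)

local notation "PX" => (Polynomial.X : Polynomial (RatFunc ℚ))

/-! ### auxiliary nonzeroness facts -/

lemma qv_pow_sub_one_ne (m : ℕ) (hm : 1 ≤ m) : qv ^ m - 1 ≠ 0 := by
  have : qv ^ m - 1 = algebraMap (Polynomial ℚ) _ (Polynomial.X ^ m - 1) := by
    rw [map_sub, map_pow, map_one, qv, RatFunc.algebraMap_X]
  rw [this]
  apply RatFunc.algebraMap_ne_zero
  intro hz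
  have := congrArg (Polynomial.eval 0) hz
  simp [Polynomial.eval_pow, zero_pow (by omega : m ≠ 0)] at this

lemma qv_sub_one_ne : qv - 1 ≠ 0 := by
  simpa using qv_pow_sub_one_ne 1 le_rfl

lemma qv_ne : qv ≠ 0 := RatFunc.X_ne_zero

lemma qint_natCast (m : ℕ) : qint (m : ℤ) = (qv ^ m - 1) / (qv - 1) := by
  rw [qint, zpow_natCast]

lemma qint_ne (m : ℕ) (hm : 1 ≤ m) : qint (m : ℤ) ≠ 0 := by
  rw [qint_natCast]
  exact div_ne_zero (qv_pow_sub_one_ne m hm) qv_sub_one_ne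

lemma qfact_ne (n : ℕ) : qfact n ≠ 0 := by
  rw [qfact]
  apply Finset.prod_ne_zero_iff.2
  intro t _
  have : ((t : ℤ) + 1) = ((t + 1 : ℕ) : ℤ) := by push_cast; ring
  rw [this]
  exact qint_ne (t + 1) (by omega)

lemma qint_succ (t : ℕ) : qint ((t + 1 : ℕ) : ℤ) = qint (t : ℤ) + qv ^ t := by
  rw [qint_natCast, qint_natCast]
  rw [div_add' _ _ _ qv_sub_one_ne]
  congr 1
  ring

/-! ### Psi basics -/

lemma psi_monomial (β : ℕ → RatFunc ℚ) (n : ℕ) (a : RatFunc ℚ) :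
    Psi β (Polynomial.monomial n a) = a * β n := by
  rw [Psi, Polynomial.sum_monomial_index]
  exact zero_mul _

lemma psi_add (β : ℕ → RatFunc ℚ) (p r : Polynomial (RatFunc ℚ)) :
    Psi β (p + r) = Psi β p + Psi β r := by
  rw [Psi, Psi, Psi, Polynomial.sum_add_index] <;> intros <;> ring

def PsiHom (β : ℕ → RatFunc ℚ) : Polynomial (RatFunc ℚ) →+ RatFunc ℚ where
  toFun := Psi β
  map_zero' := by rw [Psi, Polynomial.sum_zero_index]
  map_add' := psi_add β

lemma psi_one (β : ℕ → RatFunc ℚ) : Psi β 1 = β 0 := by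
  have : (1 : Polynomial (RatFunc ℚ)) = Polynomial.monomial 0 1 := by simp
  rw [this, psi_monomial, one_mul]

lemma psi_C_mul (β : ℕ → RatFunc ℚ) (c : RatFunc ℚ) (p : Polynomial (RatFunc ℚ)) :
    Psi β (Polynomial.C c * p) = c * Psi β p := by
  induction p using Polynomial.induction_on' with
  | add p r hp hr =>
    rw [mul_add, psi_add, psi_add, hp, hr, mul_add]
  | monomial n a =>
    rw [Polynomial.C_mul_monomial, psi_monomial, psi_monomial]; ring

lemma psi_sum (β : ℕ → RatFunc ℚ) (s : Finset ℕ) (f : ℕ → Polynomial (RatFunc ℚ)) :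
    Psi β (∑ i ∈ s, f i) = ∑ i ∈ s, Psi β (f i) :=
  map_sum (PsiHom β) f s

/-! ### the key functional equation -/

lemma psi_s_pow (β : ℕ → RatFunc ℚ) (n : ℕ) :
    Psi β ((Polynomial.C qv * PX + 1) ^ n)
      = ∑ k ∈ Finset.range (n + 1), (n.choose k : RatFunc ℚ) * qv ^ k * β k := by
  rw [add_pow]
  rw [psi_sum]
  apply Finset.sum_congr rfl
  intro k _
  have h1 : (Polynomial.C qv * PX) ^ k * 1 ^ (n - k) * (n.choose k : Polynomial (RatFunc ℚ))
      = Polynomial.C ((n.choose k : RatFunc ℚ) * qv ^ k) * PX ^ k := by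
    rw [one_pow, mul_one, mul_pow, ← C_pow, Polynomial.C_mul, Polynomial.C_eq_natCast]
    ring
  rw [h1]
  have hX : PX ^ k = Polynomial.monomial k 1 := (Polynomial.monomial_one_right_eq_X_pow k).symm
  rw [hX, Polynomial.C_mul_monomial, mul_one, psi_monomial]

lemma psi_key (β : ℕ → RatFunc ℚ) (h : IsCarlitz β) (p : Polynomial (RatFunc ℚ)) :
    qv * Psi β (p.comp (Polynomial.C qv * PX + 1))
      = Psi β p + p.coeff 1 + (qv - 1) * p.coeff 0 := by
  induction p using Polynomial.induction_on' with
  | add p r hp hr =>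
    rw [Polynomial.add_comp, psi_add, psi_add, Polynomial.coeff_add, Polynomial.coeff_add,
      mul_add, hp, hr]
    ring
  | monomial n a =>
    have hmc : (Polynomial.monomial n a).comp (Polynomial.C qv * PX + 1) = Polynomial.C a * (Polynomial.C qv * PX + 1) ^ n := by
      rw [← Polynomial.C_mul_X_pow_eq_monomial, Polynomial.mul_comp, Polynomial.C_comp,
        Polynomial.pow_comp, Polynomial.X_comp]
    rw [hmc, psi_C_mul, psi_monomial, psi_s_pow, Polynomial.coeff_monomial,
      Polynomial.coeff_monomial]
    rcases Nat.eq_zero_or_pos n with hn | hn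
    · subst hn
      simp [h.1]
      ring
    · have hrec := h.2 n hn
      have hs : qv * (a * ∑ k ∈ Finset.range (n + 1), (n.choose k : RatFunc ℚ) * qv ^ k * β k)
          = a * (β n + if n = 1 then 1 else 0) := by
        have : qv * (∑ k ∈ Finset.range (n + 1), (n.choose k : RatFunc ℚ) * qv ^ k * β k)
            = β n + if n = 1 then 1 else 0 := by linear_combination hrec
        rw [← mul_assoc, mul_comm qv a, mul_assoc, this]
      rw [hs]
      have hn0 : n ≠ 0 := by omega
      by_cases h1 : n = 1
      · subst h1; simp; ring
      · have h1' : (1 : ℕ) ≠ n := fun e => h1 e.symm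
        have h0' : (0 : ℕ) ≠ n := fun e => hn0 e.symm
        simp [h1, h1', h0']
        exact fun e => absurd e hn0

/-! ### the product polynomials -/

def fct (t : ℕ) : Polynomial (RatFunc ℚ) := Polynomial.C (qint (t : ℤ)) + Polynomial.C (qv ^ t) * PX

def Pk (k : ℕ) : Polynomial (RatFunc ℚ) := ∏ t ∈ Finset.range k, fct (t + 1)

lemma fct_one : fct 1 = Polynomial.C qv * PX + 1 := by
  rw [fct]
  have h1 : qint ((1 : ℕ) : ℤ) = 1 := by
    rw [qint_natCast, pow_one, div_self qv_sub_one_ne]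
  push_cast at h1 ⊢
  rw [h1, pow_one, Polynomial.C_1]
  ring

lemma fct_comp (t : ℕ) : (fct (t + 1)).comp (Polynomial.C qv * PX + 1) = fct (t + 2) := by
  rw [fct, fct, Polynomial.add_comp, Polynomial.C_comp, Polynomial.mul_comp,
    Polynomial.C_comp, Polynomial.X_comp]
  have h1 : qint ((t + 2 : ℕ) : ℤ) = qint ((t + 1 : ℕ) : ℤ) + qv ^ (t + 1) := by
    have := qint_succ (t + 1)
    convert this using 3 <;> push_cast <;> ring
  rw [h1]
  rw [show qv ^ (t + 2) = qv ^ (t + 1) * qv by ring]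
  rw [Polynomial.C_add, Polynomial.C_mul]
  ring

lemma Pk_comp (k : ℕ) :
    (Pk k).comp (Polynomial.C qv * PX + 1) = ∏ t ∈ Finset.range k, fct (t + 2) := by
  rw [Pk, Polynomial.prod_comp]
  exact Finset.prod_congr rfl fun t _ => fct_comp t

lemma XPk_comp (k : ℕ) :
    (PX * Pk k).comp (Polynomial.C qv * PX + 1) = Pk (k + 1) := by
  rw [Polynomial.mul_comp, Polynomial.X_comp, Pk_comp]
  rw [Pk, Finset.prod_range_succ']
  rw [fct_one]
  rw [mul_comm]

lemma Pk_coeff_zero (k : ℕ) : (Pk k).coeff 0 = qfact k := by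
  rw [Polynomial.coeff_zero_eq_eval_zero, Pk, Polynomial.eval_prod, qfact]
  apply Finset.prod_congr rfl
  intro t _
  rw [fct]
  simp only [Polynomial.eval_add, Polynomial.eval_C, Polynomial.eval_mul, Polynomial.eval_X,
    mul_zero, add_zero]
  norm_cast

lemma Pk_succ (k : ℕ) :
    Pk (k + 1) = Polynomial.C (qint ((k + 1 : ℕ) : ℤ)) * Pk k + Polynomial.C (qv ^ (k + 1)) * (PX * Pk k) := by
  rw [Pk, Finset.prod_range_succ, ← Pk, fct]
  ring

lemma qfact_succ (k : ℕ) : qfact (k + 1) = qfact k * qint ((k + 1 : ℕ) : ℤ) := by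
  rw [qfact, qfact, Finset.prod_range_succ]
  norm_cast

lemma psi_Pk (β : ℕ → RatFunc ℚ) (h : IsCarlitz β) (k : ℕ) :
    Psi β (Pk k) * (qv ^ (k + 1) - 1) = qfact k * (qv - 1) := by
  induction k with
  | zero =>
    have : Pk 0 = 1 := by rw [Pk]; simp
    rw [this, psi_one, h.1, qfact]
    simp
  | succ k ih =>
    set B := Psi β (Pk (k + 1)) with hB
    set w := Psi β (PX * Pk k) with hw
    set F := qfact k with hF
    have hq : qint ((k + 1 : ℕ) : ℤ) * (qv - 1) = qv ^ (k + 1) - 1 := by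
      rw [qint_natCast, div_mul_cancel₀ _ qv_sub_one_ne]
    -- E2 from the functional equation
    have hE2 : qv * B = w + F := by
      have := psi_key β h (PX * Pk k)
      rw [XPk_comp] at this
      rw [show (1 : ℕ) = 0 + 1 from rfl, Polynomial.coeff_X_mul, Pk_coeff_zero,
        Polynomial.coeff_X_mul_zero] at this
      rw [hB, hw, hF]
      linear_combination this
    -- E1 from linearity
    have hE1 : B = qint ((k + 1 : ℕ) : ℤ) * Psi β (Pk k) + qv ^ (k + 1) * w := by
      rw [hB, Pk_succ, psi_add, psi_C_mul, psi_C_mul]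
    have h3' : B * (qv - 1) = (F + qv ^ (k + 1) * w) * (qv - 1) := by
      linear_combination (qv - 1) * hE1 + Psi β (Pk k) * hq + ih
    have h3 : B = F + qv ^ (k + 1) * w := mul_right_cancel₀ qv_sub_one_ne h3'
    rw [qfact_succ, ← hF]
    linear_combination (-F) * hq - h3 + qv ^ (k + 1) * hE2

lemma prod_Icc_one (g : ℕ → Polynomial (RatFunc ℚ)) (k : ℕ) :
    ∏ t ∈ Finset.Icc 1 k, g t = ∏ t ∈ Finset.range k, g (t + 1) := by
  induction k with
  | zero => simp
  | succ k ih =>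
    rw [Finset.prod_Icc_succ_top (by omega : 1 ≤ k + 1), ih, Finset.prod_range_succ]

lemma qbase_eq (k : ℕ) : qbase k k = Polynomial.C (qfact k)⁻¹ * Pk k := by
  rw [qbase, Pk]
  congr 1
  rw [prod_Icc_one]
  apply Finset.prod_congr rfl
  intro t _
  rw [fct]
  have he : (k : ℤ) - k + ((t + 1 : ℕ) : ℤ) = ((t + 1 : ℕ) : ℤ) := by ring
  have hz : qv ^ (((t + 1 : ℕ)) : ℤ) = qv ^ (t + 1) := zpow_natCast qv (t + 1)
  rw [show ((t + 1 : ℕ) : ℤ) = (t : ℤ) + 1 by push_cast; ring] at he hz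
  push_cast
  rw [he, hz]

theorem psi_qbase_diag (β : ℕ → RatFunc ℚ) (h : IsCarlitz β) (k : ℕ) :
    Psi β (qbase k k) = 1 / qint (k + 1) := by
  rw [qbase_eq, psi_C_mul]
  have hP : Psi β (Pk k) * (qv ^ (k + 1) - 1) = qfact k * (qv - 1) := psi_Pk β h k
  have h1 : qint ((k : ℤ) + 1) = (qv ^ (k + 1) - 1) / (qv - 1) := by
    rw [show ((k : ℤ) + 1) = ((k + 1 : ℕ) : ℤ) by push_cast; ring, qint_natCast]
  rw [h1]
  have hPk : Psi β (Pk k) = qfact k * (qv - 1) / (qv ^ (k + 1) - 1) :=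
    (eq_div_iff (qv_pow_sub_one_ne (k + 1) (by omega))).2 hP
  rw [hPk]
  have hx : qv ^ (k + 1) - 1 ≠ 0 := qv_pow_sub_one_ne (k + 1) (by omega)
  have hf : qfact k ≠ 0 := qfact_ne k
  field_simp
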